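/- With notation as in the aggregation setting, if π = (π_{iy}, π_{i0}, π_{xj}, π_{0j}) is a feasible solution of the type-aggregated linear program (satisfying π_{i0} + Σ_y π_{iy} = 1, π_{0j} + Σ_x π_{xj} = 1, and the balance conditions Σ_{i : x_i = x} π_{iy} = Σ_{j : y_j = y} π_{xj} for all x, y), then there exists a nonnegative matrix π̃ : I × J → ℝ≥0 with Σ_{j : y_j = y} π̃_{ij} = π_{iy} for all i, y and Σ_{i : x_i = x} π̃_{ij} = π_{xj} for all x, j; moreover any such π̃ satisfies Σ_j π̃_{ij} ≤ 1 for all i and Σ_i π̃_{ij} ≤ 1 for all j. -/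
import Mathlib


open Finset

/-- Any feasible point of the type-aggregated LP can be disaggregated
into a nonnegative individual-level matrix, and any such disaggregation satisfies
the individual-level row/column constraints. -/
theorem stmt1
    {I J X Y : Type*} [Fintype I] [Fintype J] [Fintype X] [Fintype Y]
    [DecidableEq X] [DecidableEq Y]
    (xm : I → X) (ym : J → Y)
    (a : I → Y → ℝ) (a0 : I → ℝ) (b : X → J → ℝ) (b0 : J → ℝ)
    (ha : ∀ i y, 0 ≤ a i y) (ha0 : ∀ i, 0 ≤ a0 i)
    (hb : ∀ x j, 0 ≤ b x j) (hb0 : ∀ j, 0 ≤ b0 j)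
    (hfeasI : ∀ i, a0 i + ∑ y, a i y = 1)
    (hfeasJ : ∀ j, b0 j + ∑ x, b x j = 1)
    (hbal : ∀ x y, ∑ i ∈ univ.filter (fun i => xm i = x), a i y
      = ∑ j ∈ univ.filter (fun j => ym j = y), b x j) :
    (∃ πt : I → J → ℝ, (∀ i j, 0 ≤ πt i j) ∧
      (∀ i y, ∑ j ∈ univ.filter (fun j => ym j = y), πt i j = a i y) ∧
      (∀ x j, ∑ i ∈ univ.filter (fun i => xm i = x), πt i j = b x j)) ∧
    (∀ πt : I → J → ℝ, (∀ i j, 0 ≤ πt i j) →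
      (∀ i y, ∑ j ∈ univ.filter (fun j => ym j = y), πt i j = a i y) →
      (∀ x j, ∑ i ∈ univ.filter (fun i => xm i = x), πt i j = b x j) →
      (∀ i, ∑ j, πt i j ≤ 1) ∧ (∀ j, ∑ i, πt i j ≤ 1)) := by
  -- total mass of type pair (x,y)
  set S : X → Y → ℝ := fun x y => ∑ i ∈ univ.filter (fun i => xm i = x), a i y with hS
  have hSnonneg : ∀ x y, 0 ≤ S x y := fun x y =>
    Finset.sum_nonneg fun i _ => ha i y
  -- if S x y = 0 then all a i y with xm i = x vanish, and all b x j with ym j = y vanish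
  have hSa : ∀ i y, S (xm i) y = 0 → a i y = 0 := by
    intro i y h
    have := (Finset.sum_eq_zero_iff_of_nonneg (fun i' _ => ha i' y)).mp h i
      (by simp)
    exact this
  have hSb : ∀ x j, S x (ym j) = 0 → b x j = 0 := by
    intro x j h
    have h' : ∑ i ∈ univ.filter (fun i => xm i = x), a i (ym j) = 0 := h
    rw [hbal x (ym j)] at h'
    exact (Finset.sum_eq_zero_iff_of_nonneg (fun j' _ => hb x j')).mp h' j (by simp)
  constructor
  · refine ⟨fun i j => a i (ym j) * b (xm i) j / S (xm i) (ym j), ?_, ?_, ?_⟩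
    · intro i j
      exact div_nonneg (mul_nonneg (ha i (ym j)) (hb (xm i) j)) (hSnonneg _ _)
    · intro i y
      have : ∑ j ∈ univ.filter (fun j => ym j = y),
          a i (ym j) * b (xm i) j / S (xm i) (ym j)
          = ∑ j ∈ univ.filter (fun j => ym j = y),
          a i y * b (xm i) j / S (xm i) y := by
        apply Finset.sum_congr rfl
        intro j hj
        simp only [Finset.mem_filter] at hj
        rw [hj.2]
      rw [this]
      by_cases h0 : S (xm i) y = 0
      · simp [hSa i y h0]
      · have : ∑ j ∈ univ.filter (fun j => ym j = y),
            a i y * b (xm i) j / S (xm i) y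
            = a i y * (∑ j ∈ univ.filter (fun j => ym j = y), b (xm i) j) / S (xm i) y := by
          rw [Finset.mul_sum, Finset.sum_div]
        rw [this, ← hbal (xm i) y]
        show a i y * S (xm i) y / S (xm i) y = a i y
        rw [mul_div_assoc, div_self h0, mul_one]
    · intro x j
      have : ∑ i ∈ univ.filter (fun i => xm i = x),
          a i (ym j) * b (xm i) j / S (xm i) (ym j)
          = ∑ i ∈ univ.filter (fun i => xm i = x),
          a i (ym j) * b x j / S x (ym j) := by
        apply Finset.sum_congr rfl
        intro i hi
        simp only [Finset.mem_filter] at hi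
        rw [hi.2]
      rw [this]
      by_cases h0 : S x (ym j) = 0
      · simp [hSb x j h0]
      · have : ∑ i ∈ univ.filter (fun i => xm i = x),
            a i (ym j) * b x j / S x (ym j)
            = (∑ i ∈ univ.filter (fun i => xm i = x), a i (ym j)) * b x j / S x (ym j) := by
          rw [Finset.sum_mul, Finset.sum_div]
        rw [this]
        show S x (ym j) * b x j / S x (ym j) = b x j
        rw [mul_comm, mul_div_assoc, div_self h0, mul_one]
  · intro πt hpos hrow hcol
    constructor
    · intro i
      have : ∑ j, πt i j = ∑ y, ∑ j ∈ univ.filter (fun j => ym j = y), πt i j := by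
        rw [Finset.sum_fiberwise_eq_sum_filter univ univ ym (πt i)]; simp
      rw [this]
      have : ∑ y, ∑ j ∈ univ.filter (fun j => ym j = y), πt i j = ∑ y, a i y := by
        exact Finset.sum_congr rfl fun y _ => hrow i y
      rw [this]
      have := hfeasI i
      linarith [ha0 i]
    · intro j
      have : ∑ i, πt i j = ∑ x, ∑ i ∈ univ.filter (fun i => xm i = x), πt i j := by
        rw [Finset.sum_fiberwise_eq_sum_filter univ univ xm (fun i => πt i j)]; simp
      rw [this]
      have : ∑ x, ∑ i ∈ univ.filter (fun i => xm i = x), πt i j = ∑ x, b x j := by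
        exact Finset.sum_congr rfl fun x _ => hcol x j
      rw [this]
      have := hfeasJ j
      linarith [hb0 j]
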